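/- Let T be a bounded operator on ℓ²(ℤ²) with rapidly decaying matrix entries and let W := {n ∈ ℤ² : n₂ ≥ 0}. Then the commutator [P_W, T] decays rapidly away from the boundary of W: for every μ ≥ 0 there exists C ≥ 0 such that |([P_W, T])_{ij}| ≤ C (1+‖i−j‖)^{−μ} (1+|i₂|)^{−μ} (1+|j₂|)^{−μ} for all i, j ∈ ℤ². -/
import Mathlib


open scoped InnerProductSpace
open ContinuousLinearMap

/-- The standard orthonormal basis of `ℓ²(ℤ²)`. -/
noncomputable def stdBasis (i : ℤ × ℤ) : lp (fun _ : ℤ × ℤ => ℂ) 2 := lp.single 2 i 1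

/-- Matrix entries `T_{ij} = ⟪e_i, T e_j⟫` of a bounded operator on `ℓ²(ℤ²)`. -/
noncomputable def matrixEntry
    (T : lp (fun _ : ℤ × ℤ => ℂ) 2 →L[ℂ] lp (fun _ : ℤ × ℤ => ℂ) 2) (i j : ℤ × ℤ) : ℂ :=
  ⟪stdBasis i, T (stdBasis j)⟫_ℂ

/-- The Euclidean norm on `ℤ²`. -/
noncomputable def euclNorm (v : ℤ × ℤ) : ℝ := Real.sqrt ((v.1 : ℝ) ^ 2 + (v.2 : ℝ) ^ 2)

/-- A bounded operator on `ℓ²(ℤ²)` has rapidly decaying matrix entries if for every `μ ≥ 0`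
there is `C ≥ 0` with `|T_{ij}| ≤ C (1 + ‖i - j‖)^{-μ}` for all `i, j`. -/
def RapidDecay
    (T : lp (fun _ : ℤ × ℤ => ℂ) 2 →L[ℂ] lp (fun _ : ℤ × ℤ => ℂ) 2) : Prop :=
  ∀ μ : ℝ, 0 ≤ μ → ∃ C : ℝ, 0 ≤ C ∧
    ∀ i j : ℤ × ℤ, ‖matrixEntry T i j‖ ≤ C * (1 + euclNorm (i - j)) ^ (-μ)

lemma inner_stdBasis_left (i : ℤ × ℤ) (f : lp (fun _ : ℤ × ℤ => ℂ) 2) :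
    ⟪stdBasis i, f⟫_ℂ = f i := by
  rw [stdBasis, lp.inner_single_left]
  simp

lemma euclNorm_nonneg (v : ℤ × ℤ) : 0 ≤ euclNorm v := Real.sqrt_nonneg _

lemma abs_snd_le_euclNorm (v : ℤ × ℤ) : |(v.2 : ℝ)| ≤ euclNorm v := by
  rw [euclNorm, ← Real.sqrt_sq_eq_abs]
  apply Real.sqrt_le_sqrt
  nlinarith [sq_nonneg ((v.1 : ℝ))]

/-- If `T` is a bounded operator on `ℓ²(ℤ²)` with rapidly decaying matrix
entries and `W = {n : n₂ ≥ 0}`, then the commutator `[P_W, T]` decays rapidly away from the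
boundary of `W`: for every `μ ≥ 0` there is `C ≥ 0` with
`|([P_W, T])_{ij}| ≤ C (1+‖i-j‖)^{-μ} (1+|i₂|)^{-μ} (1+|j₂|)^{-μ}` for all `i, j`. -/
theorem commutator_rapid_decay_away_from_boundary
    (T PW : lp (fun _ : ℤ × ℤ => ℂ) 2 →L[ℂ] lp (fun _ : ℤ × ℤ => ℂ) 2)
    (hTrd : RapidDecay T)
    (hPW : ∀ (x : lp (fun _ : ℤ × ℤ => ℂ) 2) (i : ℤ × ℤ),
      (PW x) i = if 0 ≤ i.2 then x i else 0) :
    ∀ μ : ℝ, 0 ≤ μ → ∃ C : ℝ, 0 ≤ C ∧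
      ∀ i j : ℤ × ℤ, ‖matrixEntry (PW ∘L T - T ∘L PW) i j‖
        ≤ C * (1 + euclNorm (i - j)) ^ (-μ) * (1 + |(i.2 : ℝ)|) ^ (-μ)
          * (1 + |(j.2 : ℝ)|) ^ (-μ) := by
  -- compute the commutator matrix entry
  have hPWsingle : ∀ j : ℤ × ℤ, PW (stdBasis j) =
      if 0 ≤ j.2 then stdBasis j else 0 := by
    intro j
    apply lp.ext
    funext k
    rw [hPW]
    rcases eq_or_ne k j with rfl | hne
    · by_cases hj : 0 ≤ k.2 <;> simp [hj, stdBasis, lp.single_apply]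
    · by_cases hj : 0 ≤ j.2 <;> simp [hj, stdBasis, lp.single_apply, hne]
  have hentry : ∀ i j : ℤ × ℤ, matrixEntry (PW ∘L T - T ∘L PW) i j =
      ((if 0 ≤ i.2 then (1:ℂ) else 0) - (if 0 ≤ j.2 then (1:ℂ) else 0)) * matrixEntry T i j := by
    intro i j
    have h1 : ⟪stdBasis i, PW (T (stdBasis j))⟫_ℂ
        = (if 0 ≤ i.2 then (1:ℂ) else 0) * matrixEntry T i j := by
      rw [inner_stdBasis_left, hPW, matrixEntry, inner_stdBasis_left]
      by_cases hi : 0 ≤ i.2 <;> simp [hi]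
    have h2 : ⟪stdBasis i, T (PW (stdBasis j))⟫_ℂ
        = (if 0 ≤ j.2 then (1:ℂ) else 0) * matrixEntry T i j := by
      rw [hPWsingle]
      by_cases hj : 0 ≤ j.2 <;> simp [hj, matrixEntry]
    simp only [matrixEntry] at h1 h2 ⊢
    simp only [sub_apply, comp_apply, inner_sub_right, h1, h2, sub_mul]
  intro μ hμ
  obtain ⟨C, hC0, hC⟩ := hTrd (3 * μ) (by linarith)
  refine ⟨C, hC0, fun i j => ?_⟩
  have hd0 : 0 ≤ euclNorm (i - j) := euclNorm_nonneg _
  have hdpos : (0:ℝ) < 1 + euclNorm (i - j) := by linarith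
  have hipos : (0:ℝ) < 1 + |(i.2 : ℝ)| := by positivity
  have hjpos : (0:ℝ) < 1 + |(j.2 : ℝ)| := by positivity
  by_cases hsame : (0 ≤ i.2) ↔ (0 ≤ j.2)
  · -- same side: entry is zero
    have : matrixEntry (PW ∘L T - T ∘L PW) i j = 0 := by
      rw [hentry]
      by_cases hi : 0 ≤ i.2
      · simp [hi, hsame.mp hi]
      · have hj : ¬ 0 ≤ j.2 := fun h => hi (hsame.mpr h)
        simp [hi, hj]
    rw [this, norm_zero]
    positivity
  · -- opposite sides: |i₂|, |j₂| ≤ |i₂ - j₂| ≤ ‖i - j‖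
    have habs : |(i.2 : ℝ)| ≤ |((i - j).2 : ℝ)| ∧ |(j.2 : ℝ)| ≤ |((i - j).2 : ℝ)| := by
      have : ((i - j).2 : ℝ) = (i.2 : ℝ) - (j.2 : ℝ) := by push_cast [Prod.snd_sub]; ring
      rw [this]
      by_cases h1 : 0 ≤ i.2
      · have h2 : ¬ 0 ≤ j.2 := fun h => hsame (iff_of_true h1 h)
        have hi : (0:ℝ) ≤ i.2 := by exact_mod_cast h1
        have hj : (j.2 : ℝ) < 0 := by exact_mod_cast lt_of_not_ge h2
        constructor <;> rw [abs_of_nonneg (by linarith : (0:ℝ) ≤ (i.2:ℝ) - (j.2:ℝ))]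
        · rw [abs_of_nonneg hi]; linarith
        · rw [abs_of_neg hj]; linarith
      · have h2 : 0 ≤ j.2 := by by_contra h; exact hsame (iff_of_false h1 h)
        have hi : (i.2 : ℝ) < 0 := by exact_mod_cast lt_of_not_ge h1
        have hj : (0:ℝ) ≤ j.2 := by exact_mod_cast h2
        constructor <;> rw [abs_of_nonpos (by linarith : (i.2:ℝ) - (j.2:ℝ) ≤ 0)]
        · rw [abs_of_neg hi]; linarith
        · rw [abs_of_nonneg hj]; linarith
    have hle := abs_snd_le_euclNorm (i - j)
    have hi_le : 1 + |(i.2 : ℝ)| ≤ 1 + euclNorm (i - j) := by linarith [habs.1]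
    have hj_le : 1 + |(j.2 : ℝ)| ≤ 1 + euclNorm (i - j) := by linarith [habs.2]
    have hnorm : ‖matrixEntry (PW ∘L T - T ∘L PW) i j‖ = ‖matrixEntry T i j‖ := by
      rw [hentry]
      by_cases h1 : 0 ≤ i.2
      · have h2 : ¬ 0 ≤ j.2 := fun h => hsame (iff_of_true h1 h)
        simp [h1, h2]
      · have h2 : 0 ≤ j.2 := by by_contra h; exact hsame (iff_of_false h1 h)
        simp [h1, h2]
    rw [hnorm]
    calc ‖matrixEntry T i j‖ ≤ C * (1 + euclNorm (i - j)) ^ (-(3 * μ)) := hC i j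
      _ = C * (1 + euclNorm (i - j)) ^ (-μ) * (1 + euclNorm (i - j)) ^ (-μ)
          * (1 + euclNorm (i - j)) ^ (-μ) := by
          rw [mul_assoc, mul_assoc, ← Real.rpow_add hdpos, ← Real.rpow_add hdpos]
          ring_nf
      _ ≤ C * (1 + euclNorm (i - j)) ^ (-μ) * (1 + |(i.2 : ℝ)|) ^ (-μ)
          * (1 + |(j.2 : ℝ)|) ^ (-μ) := by
          have e1 : (1 + euclNorm (i - j)) ^ (-μ) ≤ (1 + |(i.2 : ℝ)|) ^ (-μ) :=
            Real.rpow_le_rpow_of_nonpos hipos hi_le (by linarith)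
          have e2 : (1 + euclNorm (i - j)) ^ (-μ) ≤ (1 + |(j.2 : ℝ)|) ^ (-μ) :=
            Real.rpow_le_rpow_of_nonpos hjpos hj_le (by linarith)
          have hp : (0:ℝ) ≤ (1 + euclNorm (i - j)) ^ (-μ) := Real.rpow_nonneg (le_of_lt hdpos) _
          have hCp : (0:ℝ) ≤ C * (1 + euclNorm (i - j)) ^ (-μ) := mul_nonneg hC0 hp
          gcongr
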